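/- arXiv:2305.03609 — 4 statements merged into one kernel-verified Lean document; each statement's English description precedes it below -/
import Mathlib

section
/- Let $\{u_D : \mathcal{Y} \to \mathbb{R}\}$ be utility functions indexed by databases with finite sensitivity $\Delta \ge \sup_{H(D,D')\le 1}\sup_y |u_D(y) - u_{D'}(y)|$, and suppose $\int \exp(u_D(y)) d\nu(y) < \infty$ for all $D$. Then the mechanism with output density $p_D(y) \propto \exp(\frac{\epsilon}{2\Delta} u_D(y))$ with respect to $\nu$ satisfies $\epsilon$-differential privacy: for all measurable $S$ and adjacent $D, D'$, $\mathbb{P}(M(D) \in S) \le e^\epsilon \mathbb{P}(M(D') \in S)$. -/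
open MeasureTheory
open scoped ENNReal Classical

/-- The Hamming distance between two ordered tuples. -/
noncomputable def hammingDistance {α : Type*} {n : ℕ} (D D' : Fin n → α) : ℕ :=
  (Finset.univ.filter fun i => D i ≠ D' i).card

/-- the exponential mechanism, with output density proportional to
`exp(ε u_D(y) / (2Δ))` with respect to `ν`, satisfies `ε`-differential privacy. -/
theorem exponential_mechanism_is_DP {X Y : Type*} [MeasurableSpace Y] {n : ℕ}
    (ν : Measure Y) (u : (Fin n → X) → Y → ℝ) (ε Δ : ℝ) (hε : 0 < ε) (hΔ : 0 < Δ)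
    (hsens : ∀ D D' : Fin n → X, hammingDistance D D' ≤ 1 →
      ∀ y, |u D y - u D' y| ≤ Δ)
    (hint : ∀ D, Integrable (fun y => Real.exp (u D y)) ν)
    (hint' : ∀ D, Integrable (fun y => Real.exp (ε / (2 * Δ) * u D y)) ν)
    (M : (Fin n → X) → Measure Y)
    (hM : ∀ D, M D = ν.withDensity fun y =>
      ENNReal.ofReal (Real.exp (ε / (2 * Δ) * u D y) /
        ∫ z, Real.exp (ε / (2 * Δ) * u D z) ∂ν)) :
    ∀ S : Set Y, MeasurableSet S → ∀ D D' : Fin n → X, hammingDistance D D' ≤ 1 →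
      M D S ≤ ENNReal.ofReal (Real.exp ε) * M D' S := by
  intro S hS D D' hadj
  set c := ε / (2 * Δ) with hcdef
  have hc : 0 < c := div_pos hε (by linarith)
  have hcΔ : c * Δ = ε / 2 := by rw [hcdef, div_mul_eq_mul_div, mul_div_mul_right _ _ hΔ.ne']
  have key : ∀ y, c * u D y ≤ ε / 2 + c * u D' y := by
    intro y
    have h2 : u D y - u D' y ≤ Δ := (abs_le.mp (hsens D D' hadj y)).2
    nlinarith [mul_le_mul_of_nonneg_left h2 hc.le]
  have key' : ∀ y, c * u D' y ≤ ε / 2 + c * u D y := by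
    intro y
    have h2 : u D' y - u D y ≤ Δ := by
      have := (abs_le.mp (hsens D D' hadj y)).1; linarith
    nlinarith [mul_le_mul_of_nonneg_left h2 hc.le]
  set ID := ∫ z, Real.exp (c * u D z) ∂ν with hID
  set ID' := ∫ z, Real.exp (c * u D' z) ∂ν with hID'
  have hID'nn : 0 ≤ ID' := integral_nonneg fun y => (Real.exp_pos _).le
  have hmono : ID' ≤ Real.exp (ε / 2) * ID := by
    calc ID' ≤ ∫ z, Real.exp (ε / 2) * Real.exp (c * u D z) ∂ν := by
          apply integral_mono (hint' D') ((hint' D).const_mul _)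
          intro y
          show Real.exp _ ≤ Real.exp (ε / 2) * Real.exp _
          rw [← Real.exp_add]
          exact Real.exp_le_exp.mpr (key' y)
      _ = Real.exp (ε / 2) * ID := integral_const_mul _ _
  have hmono' : ID ≤ Real.exp (ε / 2) * ID' := by
    calc ID ≤ ∫ z, Real.exp (ε / 2) * Real.exp (c * u D' z) ∂ν := by
          apply integral_mono (hint' D) ((hint' D').const_mul _)
          intro y
          show Real.exp _ ≤ Real.exp (ε / 2) * Real.exp _
          rw [← Real.exp_add]
          exact Real.exp_le_exp.mpr (key y)
      _ = Real.exp (ε / 2) * ID' := integral_const_mul _ _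
  rw [hM D, hM D', withDensity_apply _ hS, withDensity_apply _ hS]
  by_cases hpos : 0 < ID'
  · have hIDpos : 0 < ID := by nlinarith [Real.exp_pos (ε / 2)]
    have hptw : ∀ y, ENNReal.ofReal (Real.exp (c * u D y) / ID) ≤
        ENNReal.ofReal (Real.exp ε) * ENNReal.ofReal (Real.exp (c * u D' y) / ID') := by
      intro y
      rw [← ENNReal.ofReal_mul (Real.exp_pos _).le]
      apply ENNReal.ofReal_le_ofReal
      rw [← mul_div_assoc, div_le_div_iff₀ hIDpos hpos]
      have h1 : Real.exp (c * u D y) ≤ Real.exp (ε / 2) * Real.exp (c * u D' y) := by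
        rw [← Real.exp_add]; exact Real.exp_le_exp.mpr (key y)
      have hε2 : Real.exp ε = Real.exp (ε / 2) * Real.exp (ε / 2) := by
        rw [← Real.exp_add]; ring_nf
      calc Real.exp (c * u D y) * ID'
          ≤ (Real.exp (ε / 2) * Real.exp (c * u D' y)) * (Real.exp (ε / 2) * ID) :=
            mul_le_mul h1 hmono hID'nn (by positivity)
        _ = Real.exp ε * Real.exp (c * u D' y) * ID := by rw [hε2]; ring
    calc ∫⁻ y in S, ENNReal.ofReal (Real.exp (c * u D y) / ID) ∂ν
        ≤ ∫⁻ y in S, ENNReal.ofReal (Real.exp ε) *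
            ENNReal.ofReal (Real.exp (c * u D' y) / ID') ∂ν :=
          lintegral_mono fun y => hptw y
      _ = ENNReal.ofReal (Real.exp ε) *
            ∫⁻ y in S, ENNReal.ofReal (Real.exp (c * u D' y) / ID') ∂ν :=
          lintegral_const_mul' _ _ ENNReal.ofReal_ne_top
  · have hID'0 : ID' = 0 := le_antisymm (not_lt.mp hpos) hID'nn
    have hID0 : ID = 0 := by nlinarith [Real.exp_pos (ε / 2)]
    have : (∫⁻ y in S, ENNReal.ofReal (Real.exp (c * u D y) / ID) ∂ν) = 0 := by
      simp [hID0]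
    rw [this]
    exact zero_le
end

section
/- Let $\mathcal{M}$ be an $\epsilon$-DP mechanism and let $X, X'$ be adjacent databases. Then for any test $\phi : \mathcal{Y} \to [0,1]$ of $H_0 : X$ versus $H_1 : X'$, the sum of the type I error $\mathbb{E}\phi(\mathcal{M}(X))$ and the type II error $1 - \mathbb{E}\phi(\mathcal{M}(X'))$ is at least $\frac{2}{1+e^\epsilon}$. -/
open MeasureTheory
open scoped ENNReal Classical

lemma integral_le_exp_mul {Y : Type*} [MeasurableSpace Y] {ε : ℝ}
    (μ ν : Measure Y) [IsProbabilityMeasure μ]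
    (h : ν ≤ ENNReal.ofReal (Real.exp ε) • μ)
    (φ : Y → ℝ) (hφ : Measurable φ) (h0 : ∀ y, 0 ≤ φ y) (h1 : ∀ y, φ y ≤ 1) :
    ∫ y, φ y ∂ν ≤ Real.exp ε * ∫ y, φ y ∂μ := by
  have key : ∀ (κ : Measure Y),
      ∫ y, φ y ∂κ = (∫⁻ y, ENNReal.ofReal (φ y) ∂κ).toReal := fun κ =>
    integral_eq_lintegral_of_nonneg_ae (ae_of_all _ h0) hφ.aestronglyMeasurable
  have hfin : ∫⁻ y, ENNReal.ofReal (φ y) ∂μ ≤ 1 := by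
    calc ∫⁻ y, ENNReal.ofReal (φ y) ∂μ ≤ ∫⁻ _, 1 ∂μ :=
        lintegral_mono fun y => by simpa using ENNReal.ofReal_le_one.2 (h1 y)
      _ = 1 := by simp
  have hle : ∫⁻ y, ENNReal.ofReal (φ y) ∂ν
      ≤ ENNReal.ofReal (Real.exp ε) * ∫⁻ y, ENNReal.ofReal (φ y) ∂μ := by
    calc ∫⁻ y, ENNReal.ofReal (φ y) ∂ν
        ≤ ∫⁻ y, ENNReal.ofReal (φ y) ∂(ENNReal.ofReal (Real.exp ε) • μ) :=
          lintegral_mono' h le_rfl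
      _ = _ := lintegral_smul_measure _ _
  rw [key ν, key μ]
  have hne : ENNReal.ofReal (Real.exp ε) * ∫⁻ y, ENNReal.ofReal (φ y) ∂μ ≠ ⊤ :=
    ENNReal.mul_ne_top (by simp) (lt_of_le_of_lt hfin ENNReal.one_lt_top).ne
  have := ENNReal.toReal_mono hne hle
  rwa [ENNReal.toReal_mul, ENNReal.toReal_ofReal (Real.exp_pos ε).le] at this

/-- for an `ε`-DP mechanism `M` and adjacent databases `X, X'`, any
test `φ : 𝒴 → [0,1]` of `H₀ : X` versus `H₁ : X'` satisfies
type I error + type II error `≥ 2 / (1 + e^ε)`. -/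
theorem dp_testing_lower_bound {α Y : Type*} [MeasurableSpace Y] {n : ℕ} (ε : ℝ)
    (hε : 0 ≤ ε) (M : (Fin n → α) → Measure Y)
    (hprob : ∀ D, IsProbabilityMeasure (M D))
    (hDP : ∀ D D' : Fin n → α, hammingDistance D D' ≤ 1 → ∀ S : Set Y,
      MeasurableSet S → M D S ≤ ENNReal.ofReal (Real.exp ε) * M D' S)
    (X X' : Fin n → α) (hadj : hammingDistance X X' ≤ 1)
    (φ : Y → ℝ) (hφ : Measurable φ) (hφ01 : ∀ y, φ y ∈ Set.Icc (0 : ℝ) 1) :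
    2 / (1 + Real.exp ε) ≤ (∫ y, φ y ∂(M X)) + (1 - ∫ y, φ y ∂(M X')) := by
  haveI := hprob X; haveI := hprob X'
  have h0 : ∀ y, 0 ≤ φ y := fun y => (hφ01 y).1
  have h1 : ∀ y, φ y ≤ 1 := fun y => (hφ01 y).2
  have hadj' : hammingDistance X' X ≤ 1 := by
    simpa [hammingDistance, ne_comm] using hadj
  have hle1 : M X' ≤ ENNReal.ofReal (Real.exp ε) • M X :=
    Measure.le_iff.2 fun S hS => by simpa using hDP X' X hadj' S hS
  have hle2 : M X ≤ ENNReal.ofReal (Real.exp ε) • M X' :=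
    Measure.le_iff.2 fun S hS => by simpa using hDP X X' hadj S hS
  have hba : (∫ y, φ y ∂(M X')) ≤ Real.exp ε * ∫ y, φ y ∂(M X) :=
    integral_le_exp_mul _ _ hle1 φ hφ h0 h1
  have hint : ∀ (κ : Measure Y), Integrable φ κ → True := fun _ _ => trivial
  have hintφ : ∀ (κ : Measure Y) [IsFiniteMeasure κ], Integrable φ κ := by
    intro κ _
    refine ⟨hφ.aestronglyMeasurable, HasFiniteIntegral.of_bounded (C := 1)
      (ae_of_all _ fun y => ?_)⟩
    rw [Real.norm_eq_abs, abs_le]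
    exact ⟨by linarith [h0 y], h1 y⟩
  have hsub : ∀ (κ : Measure Y) [IsProbabilityMeasure κ],
      ∫ y, (1 - φ y) ∂κ = 1 - ∫ y, φ y ∂κ := by
    intro κ _
    rw [integral_sub (integrable_const 1) (hintφ κ)]
    simp
  have hab : (1 - ∫ y, φ y ∂(M X)) ≤ Real.exp ε * (1 - ∫ y, φ y ∂(M X')) := by
    have := integral_le_exp_mul (M X') (M X) hle2 (fun y => 1 - φ y)
      (measurable_const.sub hφ) (fun y => show (0:ℝ) ≤ 1 - φ y by linarith [h1 y]) (fun y => show 1 - φ y ≤ 1 by linarith [h0 y])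
    rwa [hsub (M X), hsub (M X')] at this
  have hexp : (0:ℝ) < Real.exp ε := Real.exp_pos ε
  rw [div_le_iff₀ (by linarith)]
  nlinarith [hba, hab]
end

section
/- Let $\mathcal{M}$ be an $\epsilon$-DP mechanism producing outputs in a metric space $(\mathcal{Y}, \rho)$, and suppose $X, Y$ are databases with Hamming distance $K$ satisfying $K\epsilon \le 1$ and $\rho(T(X), T(Y)) \ge K\Delta$ for some target statistic $T$. Then it is not possible that both $\mathbb{P}(\rho(\mathcal{M}(X), T(X)) \ge K\Delta/2) < \frac{1}{1+e}$ and $\mathbb{P}(\rho(\mathcal{M}(Y), T(Y)) \ge K\Delta/2) < \frac{1}{1+e}$. -/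
open MeasureTheory
open scoped ENNReal Classical

lemma group_privacy {α Ω : Type*} [MeasurableSpace Ω] {n : ℕ} (ε : ℝ) (hε : 0 ≤ ε)
    (M : (Fin n → α) → Measure Ω)
    (hDP : ∀ D D' : Fin n → α, hammingDistance D D' ≤ 1 → ∀ S : Set Ω,
      MeasurableSet S → M D S ≤ ENNReal.ofReal (Real.exp ε) * M D' S)
    (K : ℕ) :
    ∀ X Y : Fin n → α, hammingDistance X Y ≤ K → ∀ S : Set Ω, MeasurableSet S →
      M X S ≤ (ENNReal.ofReal (Real.exp ε)) ^ K * M Y S := by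
  have hone : (1 : ℝ≥0∞) ≤ ENNReal.ofReal (Real.exp ε) := by
    rw [show (1:ℝ≥0∞) = ENNReal.ofReal 1 by simp]
    exact ENNReal.ofReal_le_ofReal (Real.one_le_exp hε)
  induction K with
  | zero =>
    intro X Y h S hS
    have : X = Y := by
      funext i
      by_contra hi
      have : i ∈ Finset.univ.filter fun i => X i ≠ Y i := by simp [hi]
      have hpos := Finset.card_pos.mpr ⟨i, this⟩
      have h0 : (Finset.univ.filter fun i => X i ≠ Y i).card ≤ 0 := h
      omega
    simp [this]
  | succ K ih =>
    intro X Y h S hS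
    by_cases hxy : ∃ i, X i ≠ Y i
    · obtain ⟨i, hi⟩ := hxy
      set Z := Function.update X i (Y i) with hZ
      have h1 : hammingDistance X Z ≤ 1 := by
        have : (Finset.univ.filter fun j => X j ≠ Z j) ⊆ {i} := by
          intro j hj
          simp only [Finset.mem_filter] at hj
          by_contra hji
          simp only [Finset.mem_singleton] at hji
          exact hj.2 (by simp [hZ, Function.update_of_ne hji])
        calc hammingDistance X Z ≤ ({i} : Finset (Fin n)).card := Finset.card_le_card this
          _ = 1 := by simp
      have h2 : hammingDistance Z Y ≤ K := by
        have hsub : (Finset.univ.filter fun j => Z j ≠ Y j) ⊆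
            (Finset.univ.filter fun j => X j ≠ Y j).erase i := by
          intro j hj
          simp only [Finset.mem_filter] at hj
          have hji : j ≠ i := by
            intro hji; subst hji; exact hj.2 (by simp [hZ])
          refine Finset.mem_erase.mpr ⟨hji, ?_⟩
          simp only [Finset.mem_filter, Finset.mem_univ, true_and]
          rw [← Function.update_of_ne hji (Y i) X]; exact hj.2
        have hmem : i ∈ Finset.univ.filter fun j => X j ≠ Y j := by simp [hi]
        calc hammingDistance Z Y
            ≤ ((Finset.univ.filter fun j => X j ≠ Y j).erase i).card :=
              Finset.card_le_card hsub
          _ = hammingDistance X Y - 1 := by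
              rw [Finset.card_erase_of_mem hmem]; rfl
          _ ≤ K := by omega
      calc M X S ≤ ENNReal.ofReal (Real.exp ε) * M Z S := hDP X Z h1 S hS
        _ ≤ ENNReal.ofReal (Real.exp ε) * ((ENNReal.ofReal (Real.exp ε)) ^ K * M Y S) :=
            mul_le_mul_right (ih Z Y h2 S hS) _
        _ = (ENNReal.ofReal (Real.exp ε)) ^ (K + 1) * M Y S := by ring
    · push_neg at hxy
      have : X = Y := funext hxy
      subst this
      calc M X S = 1 * M X S := (one_mul _).symm
        _ ≤ (ENNReal.ofReal (Real.exp ε)) ^ (K + 1) * M X S :=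
            mul_le_mul_left (one_le_pow_of_one_le' hone _) _

/-- lower bound for private estimation. If `M` is `ε`-DP, the
databases `X, Y` are at Hamming distance `K` with `Kε ≤ 1`, and the targets
satisfy `ρ(T(X), T(Y)) ≥ KΔ`, then the mechanism cannot be within `KΔ/2` of both
targets with probability greater than `1 - 1/(1+e)` in each case. -/
theorem dp_estimation_lower_bound {α Ω : Type*} [MeasurableSpace Ω]
    [PseudoMetricSpace Ω] [OpensMeasurableSpace Ω] {n : ℕ} (ε Δ : ℝ) (hε : 0 < ε)
    (hΔ : 0 < Δ) (M : (Fin n → α) → Measure Ω)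
    (hprob : ∀ D, IsProbabilityMeasure (M D))
    (hDP : ∀ D D' : Fin n → α, hammingDistance D D' ≤ 1 → ∀ S : Set Ω,
      MeasurableSet S → M D S ≤ ENNReal.ofReal (Real.exp ε) * M D' S)
    (T : (Fin n → α) → Ω) (K : ℕ) (X Y : Fin n → α)
    (hK : hammingDistance X Y = K) (hKε : (K : ℝ) * ε ≤ 1)
    (hsep : (K : ℝ) * Δ ≤ dist (T X) (T Y)) :
    ¬ ((M X {z | (K : ℝ) * Δ / 2 ≤ dist z (T X)} <
          ENNReal.ofReal (1 / (1 + Real.exp 1))) ∧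
       (M Y {z | (K : ℝ) * Δ / 2 ≤ dist z (T Y)} <
          ENNReal.ofReal (1 / (1 + Real.exp 1)))) := by
  rintro ⟨hA, hB⟩
  have he : (0:ℝ) < 1 + Real.exp 1 := by positivity
  set A : Set Ω := {z | (K : ℝ) * Δ / 2 ≤ dist z (T X)} with hAdef
  set B : Set Ω := {z | (K : ℝ) * Δ / 2 ≤ dist z (T Y)} with hBdef
  have hAm : MeasurableSet A :=
    measurableSet_le measurable_const ((continuous_id.dist continuous_const).measurable)
  have hBm : MeasurableSet B :=
    measurableSet_le measurable_const ((continuous_id.dist continuous_const).measurable)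
  have hprobX := hprob X
  have hprobY := hprob Y
  -- Aᶜ ⊆ B
  have hsub : Aᶜ ⊆ B := by
    intro z hz
    simp only [hAdef, Set.mem_compl_iff, Set.mem_setOf_eq, not_le] at hz
    simp only [hBdef, Set.mem_setOf_eq]
    have := dist_triangle (T X) z (T Y)
    have h1 : dist (T X) z = dist z (T X) := dist_comm _ _
    nlinarith [hsep]
  -- lower bound on M X Aᶜ
  have hAc : ENNReal.ofReal (Real.exp 1 / (1 + Real.exp 1)) < M X Aᶜ := by
    have hcompl : M X Aᶜ = 1 - M X A := by
      rw [measure_compl hAm (measure_ne_top _ _), measure_univ]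
    rw [hcompl]
    rw [(ENNReal.cancel_of_ne (measure_ne_top (M X) A)).lt_tsub_iff_right]
    calc ENNReal.ofReal (Real.exp 1 / (1 + Real.exp 1)) + M X A
        < ENNReal.ofReal (Real.exp 1 / (1 + Real.exp 1)) + ENNReal.ofReal (1 / (1 + Real.exp 1)) := by
          exact ENNReal.add_lt_add_left (by simp) hA
      _ = ENNReal.ofReal (Real.exp 1 / (1 + Real.exp 1) + 1 / (1 + Real.exp 1)) := by
          rw [ENNReal.ofReal_add (by positivity) (by positivity)]
      _ = 1 := by
          rw [show Real.exp 1 / (1 + Real.exp 1) + 1 / (1 + Real.exp 1) = 1 by field_simp; ring]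
          simp
  -- upper bound via group privacy
  have hg := group_privacy ε hε.le M hDP K X Y (le_of_eq hK) B hBm
  have hpow : (ENNReal.ofReal (Real.exp ε)) ^ K = ENNReal.ofReal (Real.exp ((K:ℝ) * ε)) := by
    rw [← ENNReal.ofReal_pow (Real.exp_nonneg _), ← Real.exp_nat_mul]
  have hle : (ENNReal.ofReal (Real.exp ε)) ^ K ≤ ENNReal.ofReal (Real.exp 1) := by
    rw [hpow]
    exact ENNReal.ofReal_le_ofReal (Real.exp_le_exp.mpr hKε)
  have hupper : M X Aᶜ < ENNReal.ofReal (Real.exp 1 / (1 + Real.exp 1)) := by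
    calc M X Aᶜ ≤ M X B := measure_mono hsub
      _ ≤ (ENNReal.ofReal (Real.exp ε)) ^ K * M Y B := hg
      _ ≤ ENNReal.ofReal (Real.exp 1) * M Y B := mul_le_mul_left hle _
      _ < ENNReal.ofReal (Real.exp 1) * ENNReal.ofReal (1 / (1 + Real.exp 1)) := by
          refine ENNReal.mul_lt_mul_iff_right ?_ ENNReal.ofReal_ne_top |>.mpr hB
          simp [Real.exp_pos]
      _ = ENNReal.ofReal (Real.exp 1 / (1 + Real.exp 1)) := by
          rw [← ENNReal.ofReal_mul (Real.exp_nonneg _)]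
          ring_nf
  exact absurd hupper (not_lt.mpr hAc.le)
end

section
/- Fix points $a, b \in \mathbb{R}^d$ with $\|a-b\| = L$ and midpoint $c$, integers $n$ even and $1 \le K \le k/2$ where $k = \lceil mn\rceil \le n/2 - K$. Let $Y_n$ be the multiset with $n/2 - K$ copies of $a$, $K$ copies of $c$, and $n/2$ copies of $b$. Parametrize the segment from $a$ to $c$ by $x(t) = (1-t)a + tc$, $t \in [0,1]$ (so $x(1) = c$). Then the empirical $L^1$-DTM of $Y_n$ at resolution $m$ satisfies $\hat\delta(x(t)) = t\frac{L}{2}$ for $0 \le t \le 1/2$ and $\hat\delta(x(t)) = \frac{(k-K)tL/2 + K(1-t)L/2}{k}$ for $1/2 < t \le 1$, and in particular $\hat\delta(x(t))$ is nondecreasing in $t$ on $[0,1]$ when $K \le k/2$, with $\hat\delta(c) = \frac{k-K}{k}\cdot\frac{L}{2}$. -/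
/-- `v` is the value of the empirical `L^1`-DTM (with `k` nearest neighbours) of
the data `X` at the point `x`: every set of `k` nearest neighbours of `x` gives
the average distance `v`. -/
def DtmVal {α : Type*} [PseudoMetricSpace α] {n : ℕ} (X : Fin n → α) (k : ℕ)
    (x : α) (v : ℝ) : Prop :=
  ∀ s : Finset (Fin n), s.card = k →
    (∀ i ∈ s, ∀ j ∉ s, dist (X i) x ≤ dist (X j) x) →
    (1 / (k : ℝ)) * ∑ i ∈ s, dist (X i) x = v

set_option maxHeartbeats 2000000 in
/-- along the segment `x(t) = (1-t)a + tc` from `a` to the midpoint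
`c`, the empirical `L^1`-DTM of the multiset with `n/2 - K` copies of `a`, `K`
copies of `c`, and `n/2` copies of `b` equals `t·L/2` for `t ≤ 1/2` and
`((k-K)t·L/2 + K(1-t)·L/2)/k` for `1/2 < t ≤ 1`; in particular this value
function is nondecreasing on `[0,1]` when `K ≤ k/2`, with value
`((k-K)/k)·(L/2)` at `c`. -/
theorem dtm_along_segment {d h : ℕ} (n : ℕ) (hn : n = 2 * h)
    (a b : EuclideanSpace ℝ (Fin d)) (L : ℝ) (hL : dist a b = L)
    (c : EuclideanSpace ℝ (Fin d)) (hc : c = midpoint ℝ a b)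
    (m : ℝ) (hm : 0 < m) (k K : ℕ) (hk : k = ⌈m * n⌉₊)
    (hK1 : 1 ≤ K) (hK2 : 2 * K ≤ k) (hkK : k ≤ h - K) (hKh : K ≤ h)
    (Y : Fin n → EuclideanSpace ℝ (Fin d))
    (hY : ∀ i : Fin n, Y i =
      if (i : ℕ) < K then c else if (i : ℕ) < h then a else b)
    (x : ℝ → EuclideanSpace ℝ (Fin d))
    (hx : ∀ t : ℝ, x t = (1 - t) • a + t • c)
    (val : ℝ → ℝ)
    (hval : ∀ t : ℝ, val t = if t ≤ 1 / 2 then t * (L / 2)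
      else (((k : ℝ) - K) * t * (L / 2) + (K : ℝ) * (1 - t) * (L / 2)) / k) :
    (∀ t ∈ Set.Icc (0 : ℝ) 1, DtmVal Y k (x t) (val t)) ∧
    MonotoneOn val (Set.Icc (0 : ℝ) 1) ∧
    val 1 = ((k : ℝ) - K) / k * (L / 2) := by
  have hkh : k + K ≤ h := by omega
  have hhn : h ≤ n := by omega
  have hk0 : 0 < k := by omega
  have hkR : (0:ℝ) < (k:ℝ) := by exact_mod_cast hk0
  have hL0 : 0 ≤ L := hL ▸ dist_nonneg
  have hKk : K ≤ k := by omega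
  have hKkR : (K:ℝ) ≤ (k:ℝ) := by exact_mod_cast hKk
  have h2KR : 2*(K:ℝ) ≤ (k:ℝ) := by exact_mod_cast hK2
  -- cardinalities of index classes
  have hCcard : (Finset.univ.filter fun j : Fin n => (j:ℕ) < K).card = K := by
    rw [Finset.card_filter, Fin.sum_univ_eq_sum_range (fun j => if j < K then 1 else 0),
      ← Finset.card_filter]
    have : (Finset.range n).filter (fun j => j < K) = Finset.range K := by
      ext j; simp; omega
    rw [this, Finset.card_range]
  have hABcard : (Finset.univ.filter fun j : Fin n => (j:ℕ) < h).card = h := by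
    rw [Finset.card_filter, Fin.sum_univ_eq_sum_range (fun j => if j < h then 1 else 0),
      ← Finset.card_filter]
    have : (Finset.range n).filter (fun j => j < h) = Finset.range h := by
      ext j; simp; omega
    rw [this, Finset.card_range]
  have hAcard : (Finset.univ.filter fun j : Fin n => K ≤ (j:ℕ) ∧ (j:ℕ) < h).card = h - K := by
    rw [Finset.card_filter, Fin.sum_univ_eq_sum_range (fun j => if K ≤ j ∧ j < h then 1 else 0),
      ← Finset.card_filter]
    have : (Finset.range n).filter (fun j => K ≤ j ∧ j < h) = Finset.Ico K h := by
      ext j; simp [Finset.mem_Ico]; omega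
    rw [this, Nat.card_Ico]
  refine ⟨?_, ?_, ?_⟩
  · rintro t ⟨ht0, ht1⟩ s hcard hnear
    -- distances to the three data points
    have hc' : c = (2:ℝ)⁻¹ • (a + b) := by rw [hc, midpoint_eq_smul_add, invOf_eq_inv]
    have hac : dist a c = L / 2 := by
      rw [hc, dist_left_midpoint, ← hL]
      norm_num
      ring
    have hda : dist a (x t) = t * (L / 2) := by
      have h1 : a - x t = t • (a - c) := by rw [hx]; module
      rw [dist_eq_norm, h1, norm_smul, Real.norm_eq_abs, abs_of_nonneg ht0, ← dist_eq_norm, hac]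
    have hdc : dist c (x t) = (1 - t) * (L / 2) := by
      have h1 : c - x t = (1 - t) • (c - a) := by rw [hx]; module
      rw [dist_eq_norm, h1, norm_smul, Real.norm_eq_abs, abs_of_nonneg (by linarith),
        ← dist_eq_norm, dist_comm, hac]
    have hdb : dist b (x t) = (1 - t / 2) * L := by
      have h1 : b - x t = (1 - t / 2) • (b - a) := by rw [hx, hc']; module
      rw [dist_eq_norm, h1, norm_smul, Real.norm_eq_abs, abs_of_nonneg (by linarith),
        ← dist_eq_norm, dist_comm, hL]
    have dY : ∀ i : Fin n, dist (Y i) (x t) =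
        if (i:ℕ) < K then (1 - t) * (L/2) else if (i:ℕ) < h then t * (L/2)
        else (1 - t/2) * L := by
      intro i
      rw [hY i]
      split_ifs with h1 h2
      · exact hdc
      · exact hda
      · exact hdb
    set sc := s.filter (fun i : Fin n => (i:ℕ) < K) with hscdef
    set sr := s.filter (fun i : Fin n => ¬ (i:ℕ) < K) with hsrdef
    set sa := sr.filter (fun i : Fin n => (i:ℕ) < h) with hsadef
    set sb := sr.filter (fun i : Fin n => ¬ (i:ℕ) < h) with hsbdef
    have hpart1 : sc.card + sr.card = k := by
      rw [← hcard]; exact Finset.card_filter_add_card_filter_not _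
    have hpart2 : sa.card + sb.card = sr.card :=
      Finset.card_filter_add_card_filter_not _
    have hsum : ∑ i ∈ s, dist (Y i) (x t)
        = (sc.card : ℝ) * ((1-t)*(L/2)) + ((sa.card:ℝ) * (t*(L/2))
          + (sb.card:ℝ) * ((1-t/2)*L)) := by
      rw [← Finset.sum_filter_add_sum_filter_not s (fun i : Fin n => (i:ℕ) < K)
          (fun i => dist (Y i) (x t)),
        ← Finset.sum_filter_add_sum_filter_not sr (fun i : Fin n => (i:ℕ) < h)
          (fun i => dist (Y i) (x t))]
      congr 1
      · have he : ∀ i ∈ sc, dist (Y i) (x t) = (1-t)*(L/2) := fun i hi => by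
          rw [dY i, if_pos (Finset.mem_filter.1 hi).2]
        rw [Finset.sum_congr rfl he, Finset.sum_const, nsmul_eq_mul]
      congr 1
      · have he : ∀ i ∈ sa, dist (Y i) (x t) = t*(L/2) := fun i hi => by
          have h1 := Finset.mem_filter.1 hi
          have h2 := Finset.mem_filter.1 h1.1
          rw [dY i, if_neg h2.2, if_pos h1.2]
        rw [Finset.sum_congr rfl he, Finset.sum_const, nsmul_eq_mul]
      · have he : ∀ i ∈ sb, dist (Y i) (x t) = (1-t/2)*L := fun i hi => by
          have h1 := Finset.mem_filter.1 hi
          have h2 := Finset.mem_filter.1 h1.1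
          rw [dY i, if_neg h2.2, if_neg h1.2]
        rw [Finset.sum_congr rfl he, Finset.sum_const, nsmul_eq_mul]
    rcases hL0.lt_or_eq with hLpos | hLz
    · -- L > 0
      by_cases hth : t ≤ 1/2
      · -- no b-points among the neighbours
        have hnb : sb.card = 0 := by
          rw [Finset.card_eq_zero]
          by_contra hne
          obtain ⟨i, hi⟩ := Finset.nonempty_of_ne_empty hne
          have h1 := Finset.mem_filter.1 hi
          have h2 := Finset.mem_filter.1 h1.1
          have his : i ∈ s := h2.1
          have hiK : ¬ (i:ℕ) < K := h2.2
          have hih : ¬ (i:ℕ) < h := h1.2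
          have hAs : ¬ (Finset.univ.filter fun j : Fin n => K ≤ (j:ℕ) ∧ (j:ℕ) < h) ⊆ s := by
            intro hsub
            have hsub2 : (Finset.univ.filter fun j : Fin n => K ≤ (j:ℕ) ∧ (j:ℕ) < h)
                ⊆ s.erase i := by
              intro y hy
              refine Finset.mem_erase.2 ⟨?_, hsub hy⟩
              rintro rfl
              exact hih (Finset.mem_filter.1 hy).2.2
            have h3 := Finset.card_le_card hsub2
            rw [Finset.card_erase_of_mem his, hcard, hAcard] at h3
            omega
          obtain ⟨j, hjA, hjs⟩ := Finset.not_subset.1 hAs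
          obtain ⟨hjK, hjh⟩ := (Finset.mem_filter.1 hjA).2
          have hle := hnear i his j hjs
          rw [dY i, if_neg hiK, if_neg hih, dY j, if_neg (by omega), if_pos hjh] at hle
          nlinarith [mul_pos (show (0:ℝ) < 1 - t by linarith) hLpos]
        have hnc : (sc.card : ℝ) * (1 - 2*t) = 0 := by
          rcases hth.lt_or_eq with htlt | hteq
          · have hc0 : sc.card = 0 := by
              rw [Finset.card_eq_zero]
              by_contra hne
              obtain ⟨i, hi⟩ := Finset.nonempty_of_ne_empty hne
              have h1 := Finset.mem_filter.1 hi
              have his : i ∈ s := h1.1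
              have hiK : (i:ℕ) < K := h1.2
              have hAs : ¬ (Finset.univ.filter fun j : Fin n => K ≤ (j:ℕ) ∧ (j:ℕ) < h) ⊆ s := by
                intro hsub
                have hsub2 : (Finset.univ.filter fun j : Fin n => K ≤ (j:ℕ) ∧ (j:ℕ) < h)
                    ⊆ s.erase i := by
                  intro y hy
                  refine Finset.mem_erase.2 ⟨?_, hsub hy⟩
                  rintro rfl
                  have := (Finset.mem_filter.1 hy).2.1
                  omega
                have h3 := Finset.card_le_card hsub2
                rw [Finset.card_erase_of_mem his, hcard, hAcard] at h3
                omega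
              obtain ⟨j, hjA, hjs⟩ := Finset.not_subset.1 hAs
              obtain ⟨hjK, hjh⟩ := (Finset.mem_filter.1 hjA).2
              have hle := hnear i his j hjs
              rw [dY i, if_pos hiK, dY j, if_neg (by omega), if_pos hjh] at hle
              nlinarith [mul_pos (show (0:ℝ) < 1 - 2*t by linarith) hLpos]
            rw [hc0]
            norm_num
          · rw [hteq]; ring
        rw [hval, if_pos hth, hsum, hnb]
        have hna : (sa.card : ℝ) = (k:ℝ) - (sc.card:ℝ) := by
          have hnat : sc.card + sa.card = k := by omega
          have := congrArg (Nat.cast : ℕ → ℝ) hnat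
          push_cast at this
          linarith
        rw [hna]
        push_cast
        rw [one_div, inv_mul_eq_div, div_eq_iff hkR.ne']
        linear_combination (L / 2) * hnc
      · -- t > 1/2 : all c-points are neighbours
        have hth' : 1/2 < t := not_le.1 hth
        have hCsub : (Finset.univ.filter fun j : Fin n => (j:ℕ) < K) ⊆ s := by
          intro j hj
          by_contra hjs
          have hjK : (j:ℕ) < K := (Finset.mem_filter.1 hj).2
          have hex : ∃ i ∈ s, ¬ (i:ℕ) < K := by
            by_contra hall
            push_neg at hall
            have hsub2 : s ⊆ (Finset.univ.filter fun j : Fin n => (j:ℕ) < K).erase j := by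
              intro y hy
              exact Finset.mem_erase.2 ⟨fun e => hjs (e ▸ hy),
                Finset.mem_filter.2 ⟨Finset.mem_univ y, hall y hy⟩⟩
            have h3 := Finset.card_le_card hsub2
            rw [Finset.card_erase_of_mem hj, hCcard, hcard] at h3
            omega
          obtain ⟨i, his, hiK⟩ := hex
          have hle := hnear i his j hjs
          rw [dY i, if_neg hiK, dY j, if_pos hjK] at hle
          by_cases hih : (i:ℕ) < h
          · rw [if_pos hih] at hle
            nlinarith [mul_pos (show (0:ℝ) < 2*t - 1 by linarith) hLpos]
          · rw [if_neg hih] at hle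
            nlinarith [hLpos]
        have hncK : sc.card = K := by
          have h1 : sc = Finset.univ.filter fun j : Fin n => (j:ℕ) < K := by
            apply Finset.Subset.antisymm
            · intro i hi
              exact Finset.mem_filter.2 ⟨Finset.mem_univ i, (Finset.mem_filter.1 hi).2⟩
            · intro j hj
              exact Finset.mem_filter.2 ⟨hCsub hj, (Finset.mem_filter.1 hj).2⟩
          rw [h1, hCcard]
        have hnb : (sb.card : ℝ) * (1 - t) = 0 := by
          rcases ht1.lt_or_eq with htlt | hteq
          · have hb0 : sb.card = 0 := by
              rw [Finset.card_eq_zero]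
              by_contra hne
              obtain ⟨i, hi⟩ := Finset.nonempty_of_ne_empty hne
              have h1 := Finset.mem_filter.1 hi
              have h2 := Finset.mem_filter.1 h1.1
              have his : i ∈ s := h2.1
              have hiK : ¬ (i:ℕ) < K := h2.2
              have hih : ¬ (i:ℕ) < h := h1.2
              have hABs : ¬ (Finset.univ.filter fun j : Fin n => (j:ℕ) < h) ⊆ s := by
                intro hsub
                have hsub2 : (Finset.univ.filter fun j : Fin n => (j:ℕ) < h)
                    ⊆ s.erase i := by
                  intro y hy
                  refine Finset.mem_erase.2 ⟨?_, hsub hy⟩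
                  rintro rfl
                  exact hih (Finset.mem_filter.1 hy).2
                have h3 := Finset.card_le_card hsub2
                rw [Finset.card_erase_of_mem his, hcard, hABcard] at h3
                omega
              obtain ⟨j, hjA, hjs⟩ := Finset.not_subset.1 hABs
              have hjh : (j:ℕ) < h := (Finset.mem_filter.1 hjA).2
              have hle := hnear i his j hjs
              rw [dY i, if_neg hiK, if_neg hih, dY j] at hle
              by_cases hjK : (j:ℕ) < K
              · rw [if_pos hjK] at hle
                nlinarith [hLpos]
              · rw [if_neg hjK, if_pos hjh] at hle
                nlinarith [mul_pos (show (0:ℝ) < 1 - t by linarith) hLpos]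
            rw [hb0]
            norm_num
          · rw [hteq]; ring
        rw [hval, if_neg hth, hsum, hncK]
        have hna : (sa.card : ℝ) = (k:ℝ) - (K:ℝ) - (sb.card:ℝ) := by
          have hnat : K + (sa.card + sb.card) = k := by omega
          have := congrArg (Nat.cast : ℕ → ℝ) hnat
          push_cast at this
          linarith
        rw [hna]
        rw [one_div, inv_mul_eq_div, div_eq_div_iff hkR.ne' hkR.ne']
        linear_combination (k:ℝ) * L * hnb
    · -- degenerate case L = 0
      rw [hval, hsum, ← hLz]
      norm_num
  · -- monotonicity
    rintro t1 ⟨h10, h11⟩ t2 ⟨h20, h21⟩ h12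
    rw [hval, hval]
    by_cases i1 : t1 ≤ 1/2
    · by_cases i2 : t2 ≤ 1/2
      · rw [if_pos i1, if_pos i2]
        nlinarith [mul_nonneg (sub_nonneg.2 h12) hL0]
      · rw [if_pos i1, if_neg i2]
        rw [le_div_iff₀ hkR]
        have hx1 : (0:ℝ) ≤ ((k:ℝ) - 2*K) * (t2 - 1/2) * L := by
          apply mul_nonneg (mul_nonneg (by linarith) (by push_neg at i2; linarith)) hL0
        have hx2 : (0:ℝ) ≤ (1/2 - t1) * L * (k:ℝ) := by
          apply mul_nonneg (mul_nonneg (by linarith) hL0) hkR.le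
        nlinarith [hx1, hx2]
    · rw [if_neg i1, if_neg (show ¬ t2 ≤ 1/2 by push_neg at i1 ⊢; linarith)]
      rw [div_le_div_iff₀ hkR hkR]
      have hx1 : (0:ℝ) ≤ ((k:ℝ) - 2*K) * (t2 - t1) * L * (k:ℝ) := by
        apply mul_nonneg (mul_nonneg (mul_nonneg (by linarith) (by linarith)) hL0) hkR.le
      nlinarith [hx1]
  · rw [hval, if_neg (by norm_num)]
    ring
end
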